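/- If G is a connected graph on 5 vertices containing a spanning 5-cycle (i.e., a Hamiltonian cycle) and G is not itself a 5-cycle, then there is a vertex w of G with degree at least 3, and ι(G,2) = 1. -/

import Mathlib

open SimpleGraph

variable {V : Type*}

/-- The closed neighbourhood `N[D]` of a set `D` of vertices of `G`. -/
def closedNbhd (G : SimpleGraph V) (D : Set V) : Set V :=
  {w | ∃ d ∈ D, w = d ∨ G.Adj d w}

/-- `D` is a `k`-clique isolating set of `G` if `G − N[D]` contains no `k`-clique. -/
def IsKCliqueIsolating (G : SimpleGraph V) (k : ℕ) (D : Set V) : Prop :=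
  ∀ s : Finset ((closedNbhd G D)ᶜ : Set V), ¬ (G.induce (closedNbhd G D)ᶜ).IsNClique k s

/-- `ι(G,k)`: the minimum size of a `k`-clique isolating set of `G`. -/
noncomputable def iso (G : SimpleGraph V) (k : ℕ) : ℕ :=
  sInf {m | ∃ D : Set V, IsKCliqueIsolating G k D ∧ D.ncard = m}

theorem stmt17 [Fintype V] (G : SimpleGraph V) (h5 : Fintype.card V = 5)
    (hconn : G.Connected)
    (hham : ∃ f : SimpleGraph.cycleGraph 5 →g G, Function.Injective f)
    (hC5 : ¬ Nonempty (G ≃g SimpleGraph.cycleGraph 5)) :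
    (∃ w : V, 3 ≤ (G.neighborSet w).ncard) ∧ iso G 2 = 1 := by
  classical
  obtain ⟨f, hf⟩ := hham
  have hbij : Function.Bijective f := by
    rw [Fintype.bijective_iff_injective_and_card]
    exact ⟨hf, by simp [h5]⟩
  -- step A: a vertex of degree ≥ 3
  have hw : ∃ w : V, 3 ≤ (G.neighborSet w).ncard := by
    by_contra hno
    push_neg at hno
    -- every vertex's G-neighborhood equals the image of the cycle-neighborhood
    have hN : ∀ v : Fin 5, G.neighborSet (f v) = f '' ((cycleGraph 5).neighborSet v) := by
      intro v
      have hsub : f '' ((cycleGraph 5).neighborSet v) ⊆ G.neighborSet (f v) := by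
        rintro _ ⟨x, hx, rfl⟩
        exact f.map_adj hx
      have hne : (v : Fin 5) - 1 ≠ v + 1 := by fin_omega
      have hcard2 : ((cycleGraph 5).neighborSet v).ncard = 2 := by
        rw [show (cycleGraph 5).neighborSet v = (cycleGraph (3+2)).neighborSet v from rfl,
          cycleGraph_neighborSet]
        rw [Set.ncard_pair hne]
      have himgcard : (f '' ((cycleGraph 5).neighborSet v)).ncard = 2 := by
        rw [Set.ncard_image_of_injective _ hf, hcard2]
      have hle : (G.neighborSet (f v)).ncard ≤ 2 := by
        have := hno (f v); omega
      exact (Set.eq_of_subset_of_ncard_le hsub (by omega) (Set.toFinite _)).symm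
    refine hC5 ⟨SimpleGraph.Iso.symm ⟨Equiv.ofBijective f hbij, ?_⟩⟩
    intro a b
    simp only [Equiv.ofBijective_apply]
    constructor
    · intro hadj
      have : f b ∈ G.neighborSet (f a) := hadj
      rw [hN a] at this
      obtain ⟨x, hx, hxe⟩ := this
      exact hf hxe ▸ hx
    · exact fun h => f.map_adj h
  obtain ⟨w, hw3⟩ := hw
  refine ⟨⟨w, hw3⟩, ?_⟩
  have h1 : IsKCliqueIsolating G 2 {w} := by
    intro s hs
    have hsub : insert w (G.neighborSet w) ⊆ closedNbhd G {w} := by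
      rintro x (rfl | hx)
      · exact ⟨x, rfl, Or.inl rfl⟩
      · exact ⟨w, rfl, Or.inr hx⟩
    have h4 : 4 ≤ (closedNbhd G {w}).ncard := by
      have h1 : (insert w (G.neighborSet w)).ncard = (G.neighborSet w).ncard + 1 :=
        Set.ncard_insert_of_notMem (fun h => G.irrefl h) (Set.toFinite _)
      have h2 := Set.ncard_le_ncard hsub (Set.toFinite _)
      omega
    have hcompl : ((closedNbhd G {w})ᶜ : Set V).ncard ≤ 1 := by
      have := Set.ncard_add_ncard_compl (closedNbhd G {w}) (Set.toFinite _) (Set.toFinite _)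
      rw [Nat.card_eq_fintype_card, h5] at this
      omega
    have hcard : Fintype.card ((closedNbhd G {w})ᶜ : Set V) = ((closedNbhd G {w})ᶜ : Set V).ncard := by
      rw [← Nat.card_coe_set_eq, Nat.card_eq_fintype_card]
    have hsc := hs.card_eq
    have := Finset.card_le_univ s
    omega
  have hmem : 1 ∈ {m | ∃ D : Set V, IsKCliqueIsolating G 2 D ∧ D.ncard = m} :=
    ⟨{w}, h1, Set.ncard_singleton w⟩
  have h0 : 0 ∉ {m | ∃ D : Set V, IsKCliqueIsolating G 2 D ∧ D.ncard = m} := by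
    rintro ⟨D, hD, hD0⟩
    have hDe : D = ∅ := (Set.ncard_eq_zero (Set.toFinite _)).mp hD0
    subst hDe
    have hempty : closedNbhd G (∅ : Set V) = ∅ := by
      ext x; simp [closedNbhd]
    have hnt : Nontrivial V := Fintype.one_lt_card_iff_nontrivial.mp (by omega)
    obtain ⟨u, v, huv⟩ := hnt
    obtain ⟨a, b, hab⟩ : ∃ a b : V, G.Adj a b := by
      obtain ⟨p⟩ := hconn u v
      cases p with
      | nil => exact absurd rfl huv
      | cons h _ => exact ⟨_, _, h⟩
    have ha : a ∈ ((closedNbhd G (∅ : Set V))ᶜ : Set V) := by simp [hempty]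
    have hb : b ∈ ((closedNbhd G (∅ : Set V))ᶜ : Set V) := by simp [hempty]
    refine hD {⟨a, ha⟩, ⟨b, hb⟩} ?_
    rw [isNClique_iff]
    constructor
    · intro x hx y hy hxy
      simp only [Finset.coe_insert, Set.mem_insert_iff, Finset.coe_singleton,
        Set.mem_singleton_iff] at hx hy
      have hxy' : (x : V) ≠ (y : V) := fun h => hxy (Subtype.ext h)
      rcases hx with rfl | rfl <;> rcases hy with rfl | rfl <;>
        simp_all [comap_adj, SimpleGraph.induce_eq_coe_induce_top] <;>
        first
        | exact hab
        | exact hab.symm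
        | exact ⟨by simp [closedNbhd], by simp [closedNbhd], hab⟩
        | exact ⟨by simp [closedNbhd], by simp [closedNbhd], hab.symm⟩
    · rw [Finset.card_insert_of_notMem (by simp [Subtype.ext_iff, hab.ne]),
        Finset.card_singleton]
  refine le_antisymm (Nat.sInf_le hmem) ?_
  rw [Nat.one_le_iff_ne_zero]
  intro hz
  rcases Nat.sInf_eq_zero.mp hz with h | h
  · exact h0 h
  · rw [h] at hmem; exact hmem
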